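/- Let X and X' be independent random vectors (in some product space) and let U = g(X, X') be square-integrable. Then Var(E[U | X]) ≤ E[Var(U | X')]. -/

import Mathlib

open MeasureTheory ProbabilityTheory

section Aux

variable {α : Type*} {m m0 : MeasurableSpace α} {μ : Measure α}

lemma aux_integrable_mul {_m0 : MeasurableSpace α} {μ : Measure α} {f g : α → ℝ}
    (hf : MemLp f 2 μ) (hg : MemLp g 2 μ) :
    Integrable (fun x => f x * g x) μ := by
  have h := hf.smul hg (p := 2) (q := 2) (r := 1) (hpqr := ⟨by rw [ENNReal.inv_two_add_inv_two, inv_one]⟩)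
  rw [memLp_one_iff_integrable] at h
  exact (by simpa [smul_eq_mul, mul_comm] using h : Integrable (f * g) μ)

lemma aux_memℒp_two_condexp {m m0 : MeasurableSpace α} (hm : m ≤ m0) {μ : Measure α}
    [IsProbabilityMeasure μ] {f : α → ℝ} (hf : MemLp f 2 μ) :
    MemLp (μ[f|m]) 2 μ := by
  have hfi : Integrable f μ := hf.integrable one_le_two
  have heq : ((condExpL2 ℝ ℝ hm (hf.toLp f) : α →₂[μ] ℝ) : α → ℝ) =ᵐ[μ] μ[f|m] := by
    refine ae_eq_condExp_of_forall_setIntegral_eq hm hfi (fun s _ hμs => ?_)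
      (fun s hs hμs => ?_) ?_
    · exact integrableOn_Lp_of_measure_ne_top _ fact_one_le_two_ennreal.elim hμs.ne
    · rw [integral_condExpL2_eq hm (hf.toLp f) hs hμs.ne]
      exact setIntegral_congr_ae (hm s hs) (hf.coeFn_toLp.mono fun x hx _ => hx)
    · exact lpMeas.aestronglyMeasurable _
  exact (Lp.memLp _).ae_eq heq

lemma aux_indep_mono {Ω : Type*} {mΩ : MeasurableSpace Ω} {μ : Measure Ω}
    {m₁ m₂ m₁' m₂' : MeasurableSpace Ω} (h : Indep m₁ m₂ μ)
    (h1 : m₁' ≤ m₁) (h2 : m₂' ≤ m₂) : Indep m₁' m₂' μ :=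
  fun t1 t2 ht1 ht2 => h t1 t2 (h1 _ ht1) (h2 _ ht2)

lemma aux_sq_le {_m0 : MeasurableSpace α} {μ : Measure α} {v w : α → ℝ}
    (hv : MemLp v 2 μ) (hw : MemLp w 2 μ)
    (hvw : ∫ x, v x * w x ∂μ = ∫ x, w x * w x ∂μ) :
    ∫ x, w x * w x ∂μ ≤ ∫ x, v x * v x ∂μ := by
  have hvv := aux_integrable_mul hv hv
  have hvw' := aux_integrable_mul hv hw
  have hww := aux_integrable_mul hw hw
  have h0 : 0 ≤ ∫ x, (v x - w x) * (v x - w x) ∂μ :=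
    integral_nonneg fun x => mul_self_nonneg _
  have hexp : ∫ x, (v x - w x) * (v x - w x) ∂μ
      = ∫ x, v x * v x ∂μ - 2 * ∫ x, v x * w x ∂μ + ∫ x, w x * w x ∂μ := by
    have hpt : ∀ x, (v x - w x) * (v x - w x)
        = v x * v x - 2 * (v x * w x) + w x * w x := fun x => by ring
    simp_rw [hpt]
    have hA : Integrable (fun x => v x * v x - 2 * (v x * w x)) μ :=
      hvv.sub (hvw'.const_mul 2)
    rw [integral_add hA hww, integral_sub hvv (hvw'.const_mul 2), integral_const_mul]
  linarith

end Aux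

/-- If `X` and `X'` are independent and `U = g(X, X')` is square-integrable, then
`Var(E[U | X]) ≤ E[Var(U | X')]`. -/
theorem variance_condexp_le_expectation_condVar {Ω 𝒳 𝒴 : Type*} [MeasurableSpace Ω]
    [m𝒳 : MeasurableSpace 𝒳] [m𝒴 : MeasurableSpace 𝒴] {μ : Measure Ω} [IsProbabilityMeasure μ]
    (X : Ω → 𝒳) (X' : Ω → 𝒴) (hX : Measurable X) (hX' : Measurable X')
    (hindep : IndepFun X X' μ) (g : 𝒳 → 𝒴 → ℝ) (hg : Measurable (Function.uncurry g))
    (U : Ω → ℝ) (hUdef : U = fun ω => g (X ω) (X' ω)) (hU : MemLp U 2 μ) :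
    variance (μ[U | MeasurableSpace.comap X m𝒳]) μ ≤
      ∫ ω, (μ[(fun ω' => (U ω' - (μ[U | MeasurableSpace.comap X' m𝒴]) ω') ^ 2)
          | MeasurableSpace.comap X' m𝒴]) ω ∂μ := by
  set m1 := MeasurableSpace.comap X m𝒳 with hm1def
  set m2 := MeasurableSpace.comap X' m𝒴 with hm2def
  have hm1 := hX.comap_le (m₂ := m𝒳)
  have hm2 := hX'.comap_le (m₂ := m𝒴)
  set f := μ[U|m1] with hfdef
  set h := μ[U|m2] with hhdef
  have hf2 : MemLp f 2 μ := aux_memℒp_two_condexp hm1 hU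
  have hh2 : MemLp h 2 μ := aux_memℒp_two_condexp hm2 hU
  have hUi : Integrable U μ := hU.integrable one_le_two
  have hfi : Integrable f μ := integrable_condExp
  have hhi : Integrable h μ := integrable_condExp
  set M := ∫ ω, U ω ∂μ with hM
  have hfint : ∫ ω, f ω ∂μ = M := integral_condExp hm1
  have hhint : ∫ ω, h ω ∂μ = M := integral_condExp hm2
  -- ∫ f U = ∫ f f
  have hfU_int : Integrable (fun ω => f ω * U ω) μ := aux_integrable_mul hf2 hU
  have hUf : ∫ ω, f ω * U ω ∂μ = ∫ ω, f ω * f ω ∂μ := by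
    have hcm : μ[(f * U)|m1] =ᵐ[μ] f * μ[U|m1] :=
      condExp_mul_of_stronglyMeasurable_left stronglyMeasurable_condExp hfU_int hUi
    calc ∫ ω, f ω * U ω ∂μ = ∫ ω, (f * U) ω ∂μ := rfl
      _ = ∫ ω, (μ[(f * U)|m1]) ω ∂μ := (integral_condExp hm1).symm
      _ = ∫ ω, (f * μ[U|m1]) ω ∂μ := integral_congr_ae hcm
      _ = ∫ ω, f ω * f ω ∂μ := rfl
  -- ∫ h U = ∫ h h
  have hhU_int : Integrable (fun ω => h ω * U ω) μ := aux_integrable_mul hh2 hU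
  have hUh : ∫ ω, h ω * U ω ∂μ = ∫ ω, h ω * h ω ∂μ := by
    have hcm : μ[(h * U)|m2] =ᵐ[μ] h * μ[U|m2] :=
      condExp_mul_of_stronglyMeasurable_left stronglyMeasurable_condExp hhU_int hUi
    calc ∫ ω, h ω * U ω ∂μ = ∫ ω, (h * U) ω ∂μ := rfl
      _ = ∫ ω, (μ[(h * U)|m2]) ω ∂μ := (integral_condExp hm2).symm
      _ = ∫ ω, (h * μ[U|m2]) ω ∂μ := integral_congr_ae hcm
      _ = ∫ ω, h ω * h ω ∂μ := rfl
  -- ∫ f h = M * M by independence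
  have hfmeas : Measurable[m1] f := stronglyMeasurable_condExp.measurable
  have hhmeas : Measurable[m2] h := stronglyMeasurable_condExp.measurable
  have hIndep2 : IndepFun f h μ :=
    aux_indep_mono (m₁ := m1) (m₂ := m2) hindep hfmeas.comap_le hhmeas.comap_le
  have hfh_int : Integrable (fun ω => f ω * h ω) μ := aux_integrable_mul hf2 hh2
  have hfh : ∫ ω, f ω * h ω ∂μ = M * M := by
    calc ∫ ω, f ω * h ω ∂μ = ∫ ω, (f * h) ω ∂μ := rfl
      _ = (∫ ω, f ω ∂μ) * ∫ ω, h ω ∂μ := hIndep2.integral_mul_eq_mul_integral hfi.aestronglyMeasurable hhi.aestronglyMeasurable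
      _ = M * M := by rw [hfint, hhint]
  -- set v, w
  set v := fun ω => U ω - h ω with hvdef
  set w := fun ω => f ω - M with hwdef
  have hv2 : MemLp v 2 μ := hU.sub hh2
  have hw2 : MemLp w 2 μ := hf2.sub (memLp_const M)
  have hww : ∫ ω, w ω * w ω ∂μ = (∫ ω, f ω * f ω ∂μ) - M * M := by
    have hpt : ∀ ω, w ω * w ω = f ω * f ω - 2 * (M * f ω) + M * M := fun ω => by
      simp only [hwdef]; ring
    simp_rw [hpt]
    have hff := aux_integrable_mul hf2 hf2
    have hA : Integrable (fun ω => f ω * f ω - 2 * (M * f ω)) μ :=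
      hff.sub ((hfi.const_mul M).const_mul 2)
    rw [integral_add hA (integrable_const _),
      integral_sub hff ((hfi.const_mul M).const_mul 2), integral_const_mul,
      integral_const_mul, hfint, integral_const]
    simp only [measure_univ, ENNReal.toReal_one, smul_eq_mul, one_mul, probReal_univ]
    ring
  have hvw : ∫ ω, v ω * w ω ∂μ = ∫ ω, w ω * w ω ∂μ := by
    have hpt : ∀ ω, v ω * w ω = f ω * U ω - M * U ω - f ω * h ω + M * h ω := fun ω => by
      simp only [hvdef, hwdef]; ring
    simp_rw [hpt]
    have hB : Integrable (fun ω => f ω * U ω - M * U ω) μ := hfU_int.sub (hUi.const_mul M)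
    have hC : Integrable (fun ω => f ω * U ω - M * U ω - f ω * h ω) μ := hB.sub hfh_int
    rw [integral_add hC (hhi.const_mul M), integral_sub hB hfh_int,
      integral_sub hfU_int (hUi.const_mul M), integral_const_mul, integral_const_mul]
    rw [hUf, hfh, hhint, hww]
    ring
  have hkey : ∫ ω, w ω * w ω ∂μ ≤ ∫ ω, v ω * v ω ∂μ := aux_sq_le hv2 hw2 hvw
  -- variance
  have hvar : variance f μ = (∫ ω, f ω * f ω ∂μ) - M * M := by
    rw [variance_eq_sub hf2]
    have h1 : ∫ ω, (f ^ 2) ω ∂μ = ∫ ω, f ω * f ω ∂μ := by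
      congr 1; funext ω; simp [pow_two]
    have h2 : (∫ ω, f ω ∂μ) ^ 2 = M * M := by rw [hfint]; ring
    rw [h1, h2]
  -- RHS
  have hsq_int : Integrable (fun ω => (U ω - h ω) ^ 2) μ := by
    have := aux_integrable_mul hv2 hv2
    simpa [hvdef, pow_two] using this
  have hrhs : ∫ ω, (μ[(fun ω' => (U ω' - h ω') ^ 2)|m2]) ω ∂μ = ∫ ω, v ω * v ω ∂μ := by
    rw [integral_condExp hm2]
    congr 1; funext ω; simp [hvdef, pow_two]
  calc variance f μ = (∫ ω, f ω * f ω ∂μ) - M * M := hvar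
    _ = ∫ ω, w ω * w ω ∂μ := hww.symm
    _ ≤ ∫ ω, v ω * v ω ∂μ := hkey
    _ = ∫ ω, (μ[(fun ω' => (U ω' - h ω') ^ 2)|m2]) ω ∂μ := hrhs.symm
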